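/- Let 𝒳₁ = {y ∈ W^{1,q}([a,b]; ℝⁿ) : y(a) = A, y(b) = B} with 1 < q < ∞, L: [a,b] × ℝ^{2n} → ℝ^d continuous with |L_i(t,y,p)| ≤ K₁(|y|^q + |p|^q + 1) for each component, J(y) = ∫_a^b L(t, y(t), ẏ(t)) dt, and C ⊆ ℝ^d a nonempty closed convex cone with C ≠ ℝ^d. Suppose that for every ζ in a base B of C⁺ there exists y_ζ ∈ 𝒳₁ with ζ·J(y_ζ) = inf_{y∈𝒳₁} ζ·J(y). Then M = {y_ζ : ζ ∈ B} satisfies cl co ⋃_{y∈M}(J(y) + C) = cl co ⋃_{y∈𝒳₁}(J(y) + C), i.e., M is an infimizer. -/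

import Mathlib

open Pointwise MeasureTheory

/-- An arc in the Sobolev space `W^{1,q}([a,b]; ℝⁿ)`, represented by its continuous
representative `y` together with its weak derivative `dy ∈ L^q`, linked by
`y(t) = y(a) + ∫_a^t dy`. -/
structure SobolevArc (q : ℝ) (a b : ℝ) (n : ℕ) where
  y : ℝ → EuclideanSpace ℝ (Fin n)
  dy : ℝ → EuclideanSpace ℝ (Fin n)
  mem_lp : MemLp dy (ENNReal.ofReal q) (volume.restrict (Set.Icc a b))
  rep : ∀ t ∈ Set.Icc a b, y t = y a + ∫ s in a..t, dy s

/-- Theorem 4.1: under the growth bound on `L`, if for every `ζ` in a base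
`Bse` of `C⁺` there is a `ζ`-solution `ysel ζ ∈ 𝒳₁`, then `M = {y_ζ : ζ ∈ Bse}` is an
infimizer: `cl co ⋃_{y∈M} (J(y)+C) = cl co ⋃_{y∈𝒳₁} (J(y)+C)`. -/
theorem stmt10 {n d : ℕ} (q : ℝ) (hq : 1 < q) (a b : ℝ) (hab : a < b)
    (A B : EuclideanSpace ℝ (Fin n))
    (L : ℝ → EuclideanSpace ℝ (Fin n) → EuclideanSpace ℝ (Fin n) → EuclideanSpace ℝ (Fin d))
    (hLcont : Continuous fun x : ℝ × EuclideanSpace ℝ (Fin n) × EuclideanSpace ℝ (Fin n) =>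
      L x.1 x.2.1 x.2.2)
    (K₁ : ℝ)
    (hgrowth : ∀ (t : ℝ) (y p : EuclideanSpace ℝ (Fin n)) (i : Fin d),
      |L t y p i| ≤ K₁ * (‖y‖ ^ q + ‖p‖ ^ q + 1))
    (C : Set (EuclideanSpace ℝ (Fin d)))
    (hCne : C.Nonempty) (hCclosed : IsClosed C) (hCconv : Convex ℝ C)
    (hCcone : ∀ c ∈ C, ∀ s : ℝ, 0 ≤ s → s • c ∈ C)
    (hCproper : C ≠ Set.univ)
    (Bse : Set (EuclideanSpace ℝ (Fin d)))
    (hBse : Bse ⊆ {ξ : EuclideanSpace ℝ (Fin d) | ∀ c ∈ C, 0 ≤ (inner ℝ ξ c : ℝ)} \ {0})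
    (hBase : ∀ ζ ∈ ({ξ : EuclideanSpace ℝ (Fin d) | ∀ c ∈ C, 0 ≤ (inner ℝ ξ c : ℝ)} \ {0} :
        Set (EuclideanSpace ℝ (Fin d))),
      ∃! p : ℝ × EuclideanSpace ℝ (Fin d), 0 < p.1 ∧ p.2 ∈ Bse ∧ ζ = p.1 • p.2)
    (X1 : Set (SobolevArc q a b n))
    (hX1 : X1 = {y : SobolevArc q a b n | y.y a = A ∧ y.y b = B})
    (J : SobolevArc q a b n → EuclideanSpace ℝ (Fin d))
    (hJ : ∀ y : SobolevArc q a b n, J y = ∫ t in a..b, L t (y.y t) (y.dy t))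
    (ysel : EuclideanSpace ℝ (Fin d) → SobolevArc q a b n)
    (hysel : ∀ ζ ∈ Bse, ysel ζ ∈ X1 ∧
      ∀ y ∈ X1, (inner ℝ ζ (J (ysel ζ)) : ℝ) ≤ (inner ℝ ζ (J y) : ℝ)) :
    closure (convexHull ℝ (⋃ y ∈ ysel '' Bse, ({J y} + C))) =
      closure (convexHull ℝ (⋃ y ∈ X1, ({J y} + C))) := by
  classical
  have h0C : (0 : EuclideanSpace ℝ (Fin d)) ∈ C := by
    obtain ⟨c, hc⟩ := hCne
    simpa using hCcone c hc 0 le_rfl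
  -- if `f` is bounded below on `v + C` then `f ≥ 0` on `C`
  have hdual : ∀ (f : EuclideanSpace ℝ (Fin d) →L[ℝ] ℝ) (u : ℝ)
      (v : EuclideanSpace ℝ (Fin d)),
      (∀ c ∈ C, u < f (v + c)) → ∀ c ∈ C, 0 ≤ f c := by
    intro f u v hb c hc
    by_contra h
    push_neg at h
    set s : ℝ := max 0 ((u - f v - 1) / f c) with hs
    have hs0 : 0 ≤ s := le_max_left _ _
    have h1 := hb _ (hCcone c hc s hs0)
    have hdiv : (u - f v - 1) / f c ≤ s := le_max_right _ _
    have h2 : s * f c ≤ u - f v - 1 := by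
      calc s * f c ≤ ((u - f v - 1) / f c) * f c := by nlinarith
        _ = u - f v - 1 := div_mul_cancel₀ _ (ne_of_lt h)
    simp only [map_add, ContinuousLinearMap.map_smul, smul_eq_mul] at h1
    linarith
  have hBne : Bse.Nonempty := by
    obtain ⟨z, hz⟩ := (Set.ne_univ_iff_exists_notMem C).mp hCproper
    obtain ⟨f, u, hfz, hfb⟩ := geometric_hahn_banach_point_closed hCconv hCclosed hz
    set ζ := (InnerProductSpace.toDual ℝ (EuclideanSpace ℝ (Fin d))).symm f with hζ
    have hζin : ∀ x, (inner ℝ ζ x : ℝ) = f x := fun x => InnerProductSpace.toDual_symm_apply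
    have hpos : ∀ c ∈ C, 0 ≤ (inner ℝ ζ c : ℝ) := by
      intro c hc
      rw [hζin]
      exact hdual f u 0 (fun c' hc' => by simpa using hfb c' hc') c hc
    have hu0 : u < 0 := by simpa using hfb 0 h0C
    have hζne : ζ ≠ 0 := by
      intro h
      have h1 : (inner ℝ ζ z : ℝ) = 0 := by rw [h]; simp
      rw [hζin] at h1
      linarith
    obtain ⟨⟨s, p⟩, ⟨hs, hp, hrep⟩, -⟩ := hBase ζ ⟨hpos, by simpa using hζne⟩
    exact ⟨p, hp⟩
  obtain ⟨p₀, hp₀⟩ := hBne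
  set T := closure (convexHull ℝ (⋃ y ∈ ysel '' Bse, ({J y} + C))) with hT
  have hTconv : Convex ℝ T := (convex_convexHull ℝ _).closure
  have hTclosed : IsClosed T := isClosed_closure
  have hmemT : ∀ ζ ∈ Bse, ∀ c ∈ C, J (ysel ζ) + c ∈ T := by
    intro ζ hζ c hc
    refine subset_closure (subset_convexHull ℝ _ ?_)
    exact Set.mem_biUnion (Set.mem_image_of_mem ysel hζ)
      (Set.add_mem_add (Set.mem_singleton _) hc)
  apply Set.Subset.antisymm
  · apply closure_mono
    apply convexHull_mono
    apply Set.biUnion_subset_biUnion_left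
    rintro y ⟨ζ, hζ, rfl⟩
    exact (hysel ζ hζ).1
  · refine closure_minimal (convexHull_min ?_ hTconv) hTclosed
    intro x hx
    simp only [Set.mem_iUnion] at hx
    obtain ⟨y, hy, hxmem⟩ := hx
    rw [Set.mem_add] at hxmem
    obtain ⟨j, hj, c, hc, rfl⟩ := hxmem
    rw [Set.mem_singleton_iff] at hj
    subst hj
    by_contra hxT
    obtain ⟨f, u, hfx, hfb⟩ := geometric_hahn_banach_point_closed hTconv hTclosed hxT
    set ζ := (InnerProductSpace.toDual ℝ (EuclideanSpace ℝ (Fin d))).symm f with hζ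
    have hζin : ∀ x, (inner ℝ ζ x : ℝ) = f x := fun x => InnerProductSpace.toDual_symm_apply
    have hpos : ∀ c' ∈ C, 0 ≤ (inner ℝ ζ c' : ℝ) := by
      intro c' hc'
      rw [hζin]
      exact hdual f u (J (ysel p₀)) (fun c'' hc'' => hfb _ (hmemT p₀ hp₀ c'' hc'')) c' hc'
    have hub : u < f (J (ysel p₀)) := by simpa using hfb _ (hmemT p₀ hp₀ 0 h0C)
    have hζne : ζ ≠ 0 := by
      intro h
      have h1 : (inner ℝ ζ (J y + c) : ℝ) = 0 := by rw [h]; simp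
      have h2 : (inner ℝ ζ (J (ysel p₀)) : ℝ) = 0 := by rw [h]; simp
      rw [hζin] at h1 h2
      linarith
    obtain ⟨⟨s, p⟩, ⟨hs, hp, hrep⟩, -⟩ := hBase ζ ⟨hpos, by simpa using hζne⟩
    have hmin := (hysel p hp).2 y hy
    have h0p : 0 ≤ (inner ℝ p c : ℝ) := (hBse hp).1 c hc
    have hchain : f (J (ysel p)) ≤ f (J y + c) := by
      rw [← hζin, ← hζin, hrep]
      rw [real_inner_smul_left, real_inner_smul_left, inner_add_right]
      nlinarith
    have hub2 : u < f (J (ysel p)) := by simpa using hfb _ (hmemT p hp 0 h0C)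
    linarith
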